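/- Let G be a connected cubic (3-regular) bipartite simple graph, and let e' = {u', w'} and e'' = {u'', w''} be two edges of G sharing no endpoint such that deleting e' and e'' disconnects G into exactly two connected components, with vertex sets V1 containing u' and u'' and V2 containing w' and w''. Assume that u' and u'' are not adjacent in G. Let H1 be the graph obtained from the induced subgraph of G on V1 by adding the edge {u', u''}. Then H1 is cubic, H1 is bipartite, and H1 has strictly fewer vertices than G. -/

import Mathlib

/-- Let `G` be a connected cubic bipartite simple graph, and let
`e' = {u', w'}`, `e'' = {u'', w''}` be disjoint edges whose deletion splits `G` into
exactly two connected components, with vertex sets `V1 ∋ u', u''` and `V2 ∋ w', w''`.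
If `u'` and `u''` are not adjacent in `G`, then the graph `H1` obtained from the
induced subgraph of `G` on `V1` by adding the edge `{u', u''}` is cubic, bipartite,
and has strictly fewer vertices than `G`. -/
theorem smaller_half_is_cubic_bipartite
    {V : Type*} [Fintype V] [DecidableEq V]
    (G : SimpleGraph V) [DecidableRel G.Adj]
    (hconn : G.Connected) (hreg : G.IsRegularOfDegree 3)
    (b : V → Bool) (hb : ∀ ⦃x y : V⦄, G.Adj x y → b x ≠ b y)
    (u' w' u'' w'' : V)
    (he' : G.Adj u' w') (he'' : G.Adj u'' w'')
    (hshare : ({u', w'} : Set V) ∩ ({u'', w''} : Set V) = ∅)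
    (V1 V2 : Finset V)
    (hu' : u' ∈ V1) (hu'' : u'' ∈ V1) (hw' : w' ∈ V2) (hw'' : w'' ∈ V2)
    (hV12 : Disjoint V1 V2) (hcover : V1 ∪ V2 = Finset.univ)
    (hV1conn : ∀ x ∈ V1, ∀ y ∈ V1,
      (G.deleteEdges {s(u', w'), s(u'', w'')}).Reachable x y)
    (hV2conn : ∀ x ∈ V2, ∀ y ∈ V2,
      (G.deleteEdges {s(u', w'), s(u'', w'')}).Reachable x y)
    (hsep : ¬ (G.deleteEdges {s(u', w'), s(u'', w'')}).Reachable u' w')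
    (hnadj : ¬ G.Adj u' u'')
    (H1 : SimpleGraph ↥(V1 : Set V))
    (hH1 : H1 = G.induce (V1 : Set V) ⊔
      SimpleGraph.fromEdgeSet {s((⟨u', hu'⟩ : ↥(V1 : Set V)), (⟨u'', hu''⟩ : ↥(V1 : Set V)))}) :
    (∀ v : ↥(V1 : Set V), (H1.neighborSet v).ncard = 3) ∧
    (∃ b1 : ↥(V1 : Set V) → Bool, ∀ ⦃x y : ↥(V1 : Set V)⦄, H1.Adj x y → b1 x ≠ b1 y) ∧
    V1.card < Fintype.card V := by
  classical
  -- basic distinctness facts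
  have hsh := Set.eq_empty_iff_forall_notMem.mp hshare
  have huu : u' ≠ u'' := fun h => hsh u' ⟨by simp, by simp [h]⟩
  have huw'' : u' ≠ w'' := fun h => hsh u' ⟨by simp, by simp [h]⟩
  have hwu'' : w' ≠ u'' := fun h => hsh w' ⟨by simp, by simp [h]⟩
  have hww : w' ≠ w'' := fun h => hsh w' ⟨by simp, by simp [h]⟩
  have hw'1 : w' ∉ V1 := fun h => (Finset.disjoint_left.mp hV12 h) hw'
  have hw''1 : w'' ∉ V1 := fun h => (Finset.disjoint_left.mp hV12 h) hw''
  have hmemV2 : ∀ y : V, y ∉ V1 → y ∈ V2 := by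
    intro y hy
    have : y ∈ V1 ∪ V2 := by rw [hcover]; exact Finset.mem_univ y
    rcases Finset.mem_union.mp this with h | h
    · exact absurd h hy
    · exact h
  -- the cross lemma: the only edges leaving V1 are e' and e''
  have cross : ∀ x ∈ V1, ∀ y, G.Adj x y → y ∉ V1 →
      (x = u' ∧ y = w') ∨ (x = u'' ∧ y = w'') := by
    intro x hx y hxy hy
    have hy2 : y ∈ V2 := hmemV2 y hy
    by_contra hcon
    push_neg at hcon
    have hne : s(x, y) ∉ ({s(u', w'), s(u'', w'')} : Set (Sym2 V)) := by
      intro hmem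
      rcases hmem with h | h
      · rcases Sym2.eq_iff.mp h with ⟨h1, h2⟩ | ⟨h1, h2⟩
        · exact (hcon.1 h1) h2
        · exact hw'1 (h1 ▸ hx)
      · rcases Sym2.eq_iff.mp h with ⟨h1, h2⟩ | ⟨h1, h2⟩
        · exact (hcon.2 h1) h2
        · exact hw''1 (h1 ▸ hx)
    have hadj : (G.deleteEdges {s(u', w'), s(u'', w'')}).Adj x y :=
      SimpleGraph.deleteEdges_adj.mpr ⟨hxy, hne⟩
    exact hsep ((hV1conn u' hu' x hx).trans (hadj.reachable.trans (hV2conn y hy2 w' hw')))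
  have inV1 : ∀ x ∈ V1, x ≠ u' → x ≠ u'' → ∀ y, G.Adj x y → y ∈ V1 := by
    intro x hx h1 h2 y hxy
    by_contra hy
    rcases cross x hx y hxy hy with ⟨h, _⟩ | ⟨h, _⟩
    · exact h1 h
    · exact h2 h
  -- preimage ncard lemma
  have pre_ncard : ∀ S : Set V, S ⊆ (V1 : Set V) →
      ((Subtype.val ⁻¹' S : Set ↥(V1 : Set V))).ncard = S.ncard := by
    intro S hS
    have himg : Subtype.val '' (Subtype.val ⁻¹' S : Set ↥(V1 : Set V)) = S := by
      rw [Set.image_preimage_eq_inter_range, Subtype.range_coe]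
      exact Set.inter_eq_left.mpr hS
    conv_rhs => rw [← himg]
    exact (Set.ncard_image_of_injective _ Subtype.val_injective).symm
  have ncard_nbhd : ∀ x : V, (G.neighborSet x).ncard = 3 := by
    intro x
    rw [Set.ncard_eq_toFinset_card', Set.toFinset_card,
      SimpleGraph.card_neighborSet_eq_degree, hreg]
  -- adjacency in H1
  have hadjH1 : ∀ x y : ↥(V1 : Set V), H1.Adj x y ↔
      G.Adj ↑x ↑y ∨ ((↑x = u' ∧ ↑y = u'') ∨ (↑x = u'' ∧ ↑y = u')) := by
    intro x y
    rw [hH1]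
    simp only [SimpleGraph.sup_adj, SimpleGraph.comap_adj, Function.Embedding.coe_subtype,
      SimpleGraph.fromEdgeSet_adj, Set.mem_singleton_iff]
    constructor
    · rintro (h | ⟨h, hne⟩)
      · exact Or.inl h
      · rcases Sym2.eq_iff.mp h with ⟨h1, h2⟩ | ⟨h1, h2⟩
        · exact Or.inr (Or.inl ⟨congrArg Subtype.val h1, congrArg Subtype.val h2⟩)
        · exact Or.inr (Or.inr ⟨congrArg Subtype.val h1, congrArg Subtype.val h2⟩)
    · rintro (h | ⟨h1, h2⟩ | ⟨h1, h2⟩)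
      · exact Or.inl h
      · refine Or.inr ⟨?_, ?_⟩
        · rw [Sym2.eq_iff]; exact Or.inl ⟨Subtype.ext h1, Subtype.ext h2⟩
        · intro h; apply huu; rw [← h1, ← h2, h]
      · refine Or.inr ⟨?_, ?_⟩
        · rw [Sym2.eq_iff]; exact Or.inr ⟨Subtype.ext h1, Subtype.ext h2⟩
        · intro h; apply huu; rw [← h1, ← h2, h]
  refine ⟨?_, ?_, ?_⟩
  · -- cubic
    intro v
    by_cases hv' : (v : V) = u'
    · have : H1.neighborSet v = Subtype.val ⁻¹' ((G.neighborSet u' \ {w'}) ∪ {u''}) := by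
        ext y
        simp only [SimpleGraph.mem_neighborSet, hadjH1, Set.mem_preimage, Set.mem_union,
          Set.mem_diff, Set.mem_singleton_iff, SimpleGraph.mem_neighborSet, hv']
        constructor
        · rintro (h | ⟨h1, h2⟩ | ⟨h1, h2⟩)
          · refine Or.inl ⟨h, ?_⟩
            intro hyw
            exact hw'1 (hyw ▸ y.2)
          · exact Or.inr h2
          · exact absurd h1 huu
        · rintro (⟨h, _⟩ | h)
          · exact Or.inl h
          · exact Or.inr (Or.inl ⟨trivial, h⟩)
      rw [this, pre_ncard]
      · have hnm : u'' ∉ G.neighborSet u' \ {w'} := by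
          intro h
          exact hnadj h.1
        have h2 : (G.neighborSet u' \ {w'}).ncard = 2 := by
          rw [Set.ncard_diff_singleton_of_mem (show w' ∈ G.neighborSet u' from he'), ncard_nbhd]
        rw [Set.union_singleton, Set.ncard_insert_of_notMem hnm ((Set.toFinite _).diff), h2]
      · rintro y (⟨hy, hyne⟩ | hy)
        · by_contra hyn
          rcases cross u' hu' y hy hyn with ⟨_, h2⟩ | ⟨h1, _⟩
          · exact hyne h2
          · exact huu h1
        · simp only [Set.mem_singleton_iff] at hy
          subst hy
          exact hu''
    · by_cases hv'' : (v : V) = u''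
      · have : H1.neighborSet v = Subtype.val ⁻¹' ((G.neighborSet u'' \ {w''}) ∪ {u'}) := by
          ext y
          simp only [SimpleGraph.mem_neighborSet, hadjH1, Set.mem_preimage, Set.mem_union,
            Set.mem_diff, Set.mem_singleton_iff, SimpleGraph.mem_neighborSet, hv'']
          constructor
          · rintro (h | ⟨h1, h2⟩ | ⟨h1, h2⟩)
            · refine Or.inl ⟨h, ?_⟩
              intro hyw
              exact hw''1 (hyw ▸ y.2)
            · exact absurd h1.symm huu
            · exact Or.inr h2
          · rintro (⟨h, _⟩ | h)
            · exact Or.inl h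
            · exact Or.inr (Or.inr ⟨trivial, h⟩)
        rw [this, pre_ncard]
        · have hnm : u' ∉ G.neighborSet u'' \ {w''} := by
            intro h
            exact hnadj h.1.symm
          have h2 : (G.neighborSet u'' \ {w''}).ncard = 2 := by
            rw [Set.ncard_diff_singleton_of_mem (show w'' ∈ G.neighborSet u'' from he''), ncard_nbhd]
          rw [Set.union_singleton, Set.ncard_insert_of_notMem hnm ((Set.toFinite _).diff), h2]
        · rintro y (⟨hy, hyne⟩ | hy)
          · by_contra hyn
            rcases cross u'' hu'' y hy hyn with ⟨h1, _⟩ | ⟨_, h2⟩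
            · exact huu h1.symm
            · exact hyne h2
          · simp only [Set.mem_singleton_iff] at hy
            subst hy
            exact hu'
      · have : H1.neighborSet v = Subtype.val ⁻¹' (G.neighborSet ↑v) := by
          ext y
          simp only [SimpleGraph.mem_neighborSet, hadjH1, Set.mem_preimage]
          constructor
          · rintro (h | ⟨h1, _⟩ | ⟨h1, _⟩)
            · exact h
            · exact absurd h1 hv'
            · exact absurd h1 hv''
          · exact Or.inl
        rw [this, pre_ncard]
        · exact ncard_nbhd _
        · intro y hy
          exact inV1 ↑v (Finset.mem_coe.mp v.2) hv' hv'' y hy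
  · -- bipartite
    have bne : b u' ≠ b u'' := by
      intro heq
      set c := b u' with hc
      set P : Bool → Finset (V × V) := fun d =>
        Finset.univ.filter (fun p : V × V => G.Adj p.1 p.2 ∧ p.1 ∈ V1 ∧ b p.1 = d) with hP
      have hPcard : ∀ d, (P d).card = 3 * (V1.filter (fun x => b x = d)).card := by
        intro d
        rw [Finset.card_eq_sum_card_fiberwise (f := Prod.fst)
          (t := V1.filter (fun x => b x = d))
          (fun p hp => by
            simp only [hP, Finset.mem_coe, Finset.mem_filter, Finset.mem_univ, true_and] at hp
            exact Finset.mem_coe.mpr (Finset.mem_filter.mpr ⟨hp.2.1, hp.2.2⟩))]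
        rw [Finset.sum_congr rfl (fun x hx => ?_), Finset.sum_const, smul_eq_mul, mul_comm]
        have hxm := Finset.mem_filter.mp hx
        have hfib : (P d).filter (fun p => p.1 = x)
            = (G.neighborFinset x).image (fun y => (x, y)) := by
          ext p
          simp only [hP, Finset.mem_filter, Finset.mem_univ, true_and, Finset.mem_image,
            SimpleGraph.mem_neighborFinset]
          constructor
          · rintro ⟨⟨hadj, _, _⟩, h1⟩
            exact ⟨p.2, by rw [← h1]; exact hadj, by rw [← h1]⟩
          · rintro ⟨y, hy, rfl⟩
            exact ⟨⟨hy, hxm.1, hxm.2⟩, rfl⟩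
        rw [hfib, Finset.card_image_of_injective _ (fun a b h => by simpa using h)]
        exact hreg x
      have hswap : ((P c).filter (fun p => p.2 ∈ V1)).card
          = ((P (!c)).filter (fun p => p.2 ∈ V1)).card := by
        apply Finset.card_nbij' Prod.swap Prod.swap
        · intro p hp
          simp only [hP, Finset.mem_coe, Finset.mem_filter, Finset.mem_univ, true_and, Prod.fst_swap,
            Prod.snd_swap] at hp ⊢
          refine ⟨⟨hp.1.1.symm, hp.2, ?_⟩, hp.1.2.1⟩
          have := hb hp.1.1
          rw [hp.1.2.2] at this
          cases hb2 : b p.2 <;> cases hcv : c <;> simp_all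
        · intro p hp
          simp only [hP, Finset.mem_coe, Finset.mem_filter, Finset.mem_univ, true_and, Prod.fst_swap,
            Prod.snd_swap] at hp ⊢
          refine ⟨⟨hp.1.1.symm, hp.2, ?_⟩, hp.1.2.1⟩
          have := hb hp.1.1
          rw [hp.1.2.2] at this
          cases hb2 : b p.2 <;> cases hcv : c <;> simp_all
        · intro p _; exact Prod.swap_swap p
        · intro p _; exact Prod.swap_swap p
      have hsplit : ∀ d, ((P d).filter (fun p => p.2 ∈ V1)).card
          + ((P d).filter (fun p => ¬ p.2 ∈ V1)).card = (P d).card := by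
        intro d
        exact Finset.card_filter_add_card_filter_not _
      have hout_sub : ∀ d, (P d).filter (fun p => ¬ p.2 ∈ V1)
          ⊆ ({(u', w'), (u'', w'')} : Finset (V × V)) := by
        intro d p hp
        simp only [hP, Finset.mem_filter, Finset.mem_univ, true_and] at hp
        rcases cross p.1 hp.1.2.1 p.2 hp.1.1 hp.2 with ⟨h1, h2⟩ | ⟨h1, h2⟩
        · simp [Prod.ext_iff, h1, h2]
        · simp [Prod.ext_iff, h1, h2]
      have houtc : (P c).filter (fun p => ¬ p.2 ∈ V1)
          = ({(u', w'), (u'', w'')} : Finset (V × V)) := by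
        refine Finset.Subset.antisymm (hout_sub c) ?_
        intro p hp
        simp only [Finset.mem_insert, Finset.mem_singleton] at hp
        simp only [hP, Finset.mem_filter, Finset.mem_univ, true_and]
        rcases hp with rfl | rfl
        · exact ⟨⟨he', hu', rfl⟩, hw'1⟩
        · exact ⟨⟨he'', hu'', heq.symm⟩, hw''1⟩
      have hcard2 : ({(u', w'), (u'', w'')} : Finset (V × V)).card = 2 := by
        rw [Finset.card_insert_of_notMem (by simp [Prod.ext_iff, huu]), Finset.card_singleton]
      have houtn : (P (!c)).filter (fun p => ¬ p.2 ∈ V1) = ∅ := by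
        apply Finset.eq_empty_of_forall_notMem
        intro p hp
        have hsub := hout_sub (!c) hp
        simp only [hP, Finset.mem_filter, Finset.mem_univ, true_and] at hp
        simp only [Finset.mem_insert, Finset.mem_singleton] at hsub
        have hb1 := hp.1.2.2
        rcases hsub with rfl | rfl
        · simp only at hb1; rw [← hc] at hb1; exact Bool.not_ne_self c hb1.symm
        · simp only at hb1; rw [← heq] at hb1; exact Bool.not_ne_self c hb1.symm
      have e1 := hsplit c
      have e2 := hsplit (!c)
      rw [houtc, hcard2, hPcard c] at e1
      rw [houtn, Finset.card_empty, hPcard (!c)] at e2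
      rw [hswap] at e1
      omega
    refine ⟨fun x => b ↑x, ?_⟩
    intro x y hxy
    rcases (hadjH1 x y).mp hxy with h | ⟨h1, h2⟩ | ⟨h1, h2⟩
    · exact hb h
    · simpa only [h1, h2] using bne
    · simpa only [h1, h2] using bne.symm
  · -- strictly fewer vertices
    have : (Finset.univ : Finset V).card = V1.card + V2.card := by
      rw [← hcover, Finset.card_union_of_disjoint hV12]
    rw [← Finset.card_univ, this]
    have : 0 < V2.card := Finset.card_pos.mpr ⟨w', hw'⟩
    omega
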